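/- Under the hypotheses of the must-cross-threshold lemma—0 < μᵢ < 1, k > 0 with z* := (1-μᵢ)/(2k) < 1, and γ(Az(t))ᵢ + bᵢ < b* := (1-μᵢ)²/(4k) for all t ≥ 0—if zᵢ(0) = 0 then zᵢ(t) < z* for all t ≥ 0. Equivalently, if zᵢ(0) = 0 and zᵢ(t⋆) ≥ z* for some t⋆, then there exists t* with γ(Az(t*))ᵢ + bᵢ ≥ b*. -/
import Mathlib


/-- Piecewise-linear saturation onto [0,1]. -/
noncomputable def sat (x : ℝ) : ℝ := max 0 (min 1 x)

lemma sat_le_max (x : ℝ) : sat x ≤ max 0 x :=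
  max_le_max le_rfl (min_le_right 1 x)

/-- must-cross-threshold lemma: if 0 < μᵢ < 1, k > 0,
z* = (1-μᵢ)/(2k) < 1, and the combined input γ(Az(t))ᵢ + bᵢ stays strictly
below b* = (1-μᵢ)²/(4k) for all t ≥ 0, then an agent starting at zᵢ(0) = 0
satisfies zᵢ(t) < z* for all t ≥ 0. -/
theorem nod_must_cross_threshold (n : ℕ) (A : Matrix (Fin n) (Fin n) ℝ)
    (μ : Fin n → ℝ) (k γ : ℝ) (b : Fin n → ℝ) (i : Fin n)
    (hA : ∀ i j, 0 ≤ A i j) (hμ' : ∀ j, 0 ≤ μ j) (hγ : 0 ≤ γ)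
    (hb : ∀ j, 0 ≤ b j) (hμ0 : 0 < μ i) (hμ1 : μ i < 1) (hk : 0 < k)
    (hzs : (1 - μ i) / (2 * k) < 1)
    (z : ℝ → Fin n → ℝ)
    (hode : ∀ (t : ℝ) (j : Fin n), HasDerivAt (fun s => z s j)
      (-z t j + sat (μ j * z t j + k * (z t j)^2 + γ * (∑ l, A j l * z t l) + b j)) t)
    (hin : ∀ t : ℝ, 0 ≤ t →
      γ * (∑ l, A i l * z t l) + b i < (1 - μ i)^2 / (4 * k))
    (h0 : z 0 i = 0) :
    ∀ t : ℝ, 0 ≤ t → z t i < (1 - μ i) / (2 * k) := by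
  set zs : ℝ := (1 - μ i) / (2 * k) with hzsdef
  have hzs0 : 0 < zs := div_pos (by linarith) (by linarith)
  by_contra hcon
  push_neg at hcon
  obtain ⟨t₀, ht₀0, ht₀⟩ := hcon
  -- continuity of the i-th coordinate
  have hcont : Continuous (fun s => z s i) :=
    continuous_iff_continuousAt.2 fun t => (hode t i).continuousAt
  set S : Set ℝ := {t | 0 ≤ t ∧ zs ≤ z t i} with hSdef
  have hSne : S.Nonempty := ⟨t₀, ht₀0, ht₀⟩
  have hSbdd : BddBelow S := ⟨0, fun t ht => ht.1⟩
  have hSclosed : IsClosed S := by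
    have : S = {t | 0 ≤ t} ∩ {t | zs ≤ z t i} := rfl
    rw [this]
    exact (isClosed_le continuous_const continuous_id).inter
      (isClosed_le continuous_const hcont)
  set T : ℝ := sInf S with hTdef
  have hTS : T ∈ S := hSclosed.csInf_mem hSne hSbdd
  have hT0 : 0 ≤ T := hTS.1
  have hTzs : zs ≤ z T i := hTS.2
  have hTpos : 0 < T := by
    rcases hT0.lt_or_eq with h | h
    · exact h
    · exfalso; rw [← h] at hTzs; rw [h0] at hTzs; linarith
  -- before T, below zs
  have hbefore : ∀ t, 0 ≤ t → t < T → z t i < zs := by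
    intro t ht htT
    by_contra h
    push_neg at h
    exact absurd (csInf_le hSbdd ⟨ht, h⟩) (not_le.2 htT)
  -- z T i = zs by left continuity
  have hTeq : z T i = zs := by
    refine le_antisymm ?_ hTzs
    have htend : Filter.Tendsto (fun t => z t i) (nhdsWithin T (Set.Iio T)) (nhds (z T i)) :=
      (hcont.continuousAt).tendsto.mono_left nhdsWithin_le_nhds
    refine le_of_tendsto htend ?_
    filter_upwards [Ioo_mem_nhdsLT_of_mem (⟨hTpos, le_refl T⟩ : T ∈ Set.Ioc 0 T)] with t ht
    exact (hbefore t ht.1.le ht.2).le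
  -- the drift at time T is negative
  set d : ℝ := -z T i + sat (μ i * z T i + k * (z T i)^2 + γ * (∑ l, A i l * z T l) + b i)
    with hddef
  have hd : d < 0 := by
    have hu := hin T hT0
    have hx : μ i * z T i + k * (z T i)^2 + γ * (∑ l, A i l * z T l) + b i < zs := by
      have key : μ i * zs + k * zs ^ 2 + (1 - μ i)^2 / (4 * k) = zs := by
        rw [hzsdef]; field_simp; ring
      rw [hTeq]; nlinarith [hu]
    have hsat : sat (μ i * z T i + k * (z T i)^2 + γ * (∑ l, A i l * z T l) + b i) < zs := by
      refine lt_of_le_of_lt (sat_le_max _) ?_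
      exact max_lt hzs0 hx
    rw [hTeq] at hsat; rw [hddef, hTeq]; linarith
  -- derivative negative ⇒ some earlier point strictly above zs : contradiction
  have hslope : Filter.Tendsto (slope (fun s => z s i) T) (nhdsWithin T {T}ᶜ) (nhds d) :=
    hasDerivAt_iff_tendsto_slope.1 (hode T i)
  have hev : ∀ᶠ t in nhdsWithin T {T}ᶜ, slope (fun s => z s i) T t < 0 :=
    hslope.eventually_lt_const hd
  have hmono : nhdsWithin T (Set.Iio T) ≤ nhdsWithin T {T}ᶜ :=
    nhdsWithin_mono T (fun x hx => ne_of_lt hx)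
  have hev' : ∀ᶠ t in nhdsWithin T (Set.Iio T),
      slope (fun s => z s i) T t < 0 ∧ t ∈ Set.Ioo 0 T := by
    filter_upwards [hev.filter_mono hmono,
      Ioo_mem_nhdsLT_of_mem (⟨hTpos, le_refl T⟩ : T ∈ Set.Ioc 0 T)] with t h1 h2
    exact ⟨h1, h2⟩
  obtain ⟨t, hts, ht⟩ := hev'.exists
  have hne : t - T < 0 := sub_neg.2 ht.2
  have : z t i - z T i > 0 := by
    have := hts
    rw [slope_def_field] at this
    rcases div_neg_iff.1 this with ⟨hp, hq⟩ | ⟨hp, hq⟩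
    · linarith
    · linarith
  have : zs < z t i := by rw [hTeq] at this; linarith
  exact absurd this (not_lt.2 (hbefore t ht.1.le ht.2).le)
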